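/- Let G be a finite group, N a normal subgroup of G, and p, q primes. If q divides |(G/N)/O_{p',p}(G/N)| then q divides |G/O_{p',p}(G)|. (The Hawkes graph function is Q-closed: Γ_H(G/N) ⊆ Γ_H(G).) -/

import Mathlib

/-- The join of a set of normal subgroups is normal. -/
theorem sSup_normal {G : Type*} [Group G] (S : Set (Subgroup G)) (hS : ∀ N ∈ S, N.Normal) :
    (sSup S).Normal := by
  constructor
  intro n hn g
  rw [sSup_eq_iSup'] at hn ⊢
  refine Subgroup.iSup_induction (C := fun x => g * x * g⁻¹ ∈ ⨆ N : S, (N : Subgroup G))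
    _ hn ?_ ?_ ?_
  · intro N x hx
    exact Subgroup.mem_iSup_of_mem N ((hS N N.2).conj_mem x hx g)
  · simpa using Subgroup.one_mem _
  · intro x y hx hy
    have h : g * (x * y) * g⁻¹ = (g * x * g⁻¹) * (g * y * g⁻¹) := by group
    rw [h]; exact Subgroup.mul_mem _ hx hy

/-- The `p'`-core `O_{p'}(G)`: the largest normal subgroup of `G` of order coprime to `p`,
realized as the join of all normal subgroups of order coprime to `p`. -/
def pPrimeCore (p : ℕ) (G : Type*) [Group G] : Subgroup G :=
  sSup {N : Subgroup G | N.Normal ∧ Nat.Coprime (Nat.card N) p}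

instance pPrimeCore_normal (p : ℕ) (G : Type*) [Group G] : (pPrimeCore p G).Normal :=
  sSup_normal _ fun _ hN => hN.1

/-- The `p`-core `O_p(G)`: the largest normal `p`-subgroup of `G`,
realized as the join of all normal `p`-subgroups. -/
def pCore (p : ℕ) (G : Type*) [Group G] : Subgroup G :=
  sSup {N : Subgroup G | N.Normal ∧ IsPGroup p N}

instance pCore_normal (p : ℕ) (G : Type*) [Group G] : (pCore p G).Normal :=
  sSup_normal _ fun _ hN => hN.1

/-- `O_{p',p}(G)`: the preimage in `G` of `O_p(G / O_{p'}(G))`. -/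
def OpPrimeP (p : ℕ) (G : Type*) [Group G] : Subgroup G :=
  (pCore p (G ⧸ pPrimeCore p G)).comap (QuotientGroup.mk' (pPrimeCore p G))

/-- A Schmidt group: a non-nilpotent group all of whose proper subgroups are nilpotent. -/
def IsSchmidt (G : Type*) [Group G] : Prop :=
  ¬ Group.IsNilpotent G ∧ ∀ H : Subgroup G, H ≠ ⊤ → Group.IsNilpotent H

/-- A Schmidt `(p,q)`-group: a Schmidt group whose order is divisible by exactly the
primes `p` and `q` and whose Sylow `p`-subgroup is normal. -/
def IsSchmidtPQ (p q : ℕ) (G : Type*) [Group G] : Prop :=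
  IsSchmidt G ∧ (Nat.card G).primeFactors = {p, q} ∧ ∃ P : Sylow p G, (P : Subgroup G).Normal

section Aux

open Subgroup

/-- The cardinality of the image of a subgroup divides the cardinality of the subgroup. -/
lemma card_map_dvd' {G H : Type*} [Group G] [Group H] (K : Subgroup G) (f : G →* H) :
    Nat.card (K.map f) ∣ Nat.card K :=
  Subgroup.card_dvd_of_surjective (f.subgroupMap K) (f.subgroupMap_surjective K)

/-- The cardinality of a join with a normal subgroup divides the product of cardinalities. -/
lemma card_sup_dvd' {G : Type*} [Group G] [Finite G] (H N : Subgroup G) [N.Normal] :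
    Nat.card (H ⊔ N : Subgroup G) ∣ Nat.card H * Nat.card N := by
  have h1 : Nat.card (H ⊔ N : Subgroup G) =
      Nat.card ((H ⊔ N : Subgroup G) ⧸ N.subgroupOf (H ⊔ N)) *
        Nat.card (N.subgroupOf (H ⊔ N)) :=
    Subgroup.card_eq_card_quotient_mul_card_subgroup (N.subgroupOf (H ⊔ N))
  have h2 : Nat.card ((H ⊔ N : Subgroup G) ⧸ N.subgroupOf (H ⊔ N)) =
      Nat.card (H ⧸ N.subgroupOf H) :=
    Nat.card_congr (QuotientGroup.quotientInfEquivProdNormalQuotient H N).toEquiv.symm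
  have h3 : Nat.card (N.subgroupOf (H ⊔ N)) = Nat.card N :=
    Nat.card_congr (Subgroup.subgroupOfEquivOfLe (le_sup_right : N ≤ H ⊔ N)).toEquiv
  rw [h1, h2, h3]
  exact Nat.mul_dvd_mul_right (Subgroup.card_quotient_dvd_card _) _

/-- The join of a finite set of normal `p`-subgroups is a `p`-group. -/
lemma isPGroup_sSup' {G : Type*} [Group G] [Finite G] {p : ℕ} (S : Set (Subgroup G))
    (hS : ∀ N ∈ S, N.Normal ∧ IsPGroup p N) : IsPGroup p (sSup S : Subgroup G) := by
  revert hS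
  refine Set.Finite.induction_on (motive := fun (s : Set (Subgroup G)) _ => (∀ N ∈ s, N.Normal ∧ IsPGroup p N) →
    IsPGroup p (sSup s : Subgroup G)) S (Set.toFinite S) ?_ ?_
  · intro _; rw [sSup_empty]; exact IsPGroup.of_bot
  · intro a s _ hsfin ih hS
    rw [sSup_insert]
    haveI : (sSup s).Normal := _root_.sSup_normal s fun N hN => (hS N (Set.mem_insert_of_mem a hN)).1
    exact IsPGroup.to_sup_of_normal_right (hS a (Set.mem_insert a s)).2
      (ih fun N hN => hS N (Set.mem_insert_of_mem a hN))

lemma pCore_isPGroup (p : ℕ) (G : Type*) [Group G] [Finite G] : IsPGroup p (pCore p G) :=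
  isPGroup_sSup' _ fun _ hN => hN

/-- The join of a finite set of normal subgroups of order coprime to `p` has order coprime
to `p`. -/
lemma coprime_sSup' {G : Type*} [Group G] [Finite G] {p : ℕ} (S : Set (Subgroup G))
    (hS : ∀ N ∈ S, N.Normal ∧ Nat.Coprime (Nat.card N) p) :
    Nat.Coprime (Nat.card (sSup S : Subgroup G)) p := by
  revert hS
  refine Set.Finite.induction_on (motive := fun (s : Set (Subgroup G)) _ => (∀ N ∈ s, N.Normal ∧ Nat.Coprime (Nat.card N) p) →
    Nat.Coprime (Nat.card (sSup s : Subgroup G)) p) S (Set.toFinite S) ?_ ?_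
  · intro _; rw [sSup_empty]; simp [Subgroup.card_bot, Nat.coprime_one_left]
  · intro a s _ hsfin ih hS
    rw [sSup_insert]
    haveI : (sSup s).Normal := _root_.sSup_normal s fun N hN => (hS N (Set.mem_insert_of_mem a hN)).1
    have hd : Nat.card (a ⊔ sSup s : Subgroup G) ∣ Nat.card a * Nat.card (sSup s : Subgroup G) :=
      card_sup_dvd' a (sSup s)
    exact Nat.Coprime.coprime_dvd_left hd
      (Nat.Coprime.mul (hS a (Set.mem_insert a s)).2
        (ih fun N hN => hS N (Set.mem_insert_of_mem a hN)))

lemma pPrimeCore_coprime (p : ℕ) (G : Type*) [Group G] [Finite G] :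
    Nat.Coprime (Nat.card (pPrimeCore p G)) p :=
  coprime_sSup' _ fun _ hN => hN

/-- The image of the `p'`-core under a surjective homomorphism is contained in the `p'`-core. -/
lemma pPrimeCore_map_le {G H : Type*} [Group G] [Group H] [Finite G] (f : G →* H)
    (hf : Function.Surjective f) (p : ℕ) :
    (pPrimeCore p G).map f ≤ pPrimeCore p H := by
  apply le_sSup
  exact ⟨(pPrimeCore_normal p G).map f hf,
    Nat.Coprime.coprime_dvd_left (card_map_dvd' _ f) (pPrimeCore_coprime p G)⟩

end Aux

/-- The Hawkes graph function is `Q`-closed: for a normal subgroup `N` of `G`, if `q` divides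
`|(G/N) / O_{p',p}(G/N)|` then `q` divides `|G / O_{p',p}(G)|`. -/
theorem hawkes_Q_closed {G : Type*} [Group G] [Finite G] (N : Subgroup G) [N.Normal] {p q : ℕ}
    (hp : p.Prime) (hq : q.Prime)
    (h : q ∣ Nat.card ((G ⧸ N) ⧸ OpPrimeP p (G ⧸ N))) :
    q ∣ Nat.card (G ⧸ OpPrimeP p G) := by
  classical
  set K : Subgroup G := pPrimeCore p G with hKdef
  set Q := G ⧸ N
  set K' : Subgroup Q := pPrimeCore p Q with hK'def
  let π : G →* Q := QuotientGroup.mk' N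
  have hπ : Function.Surjective π := QuotientGroup.mk'_surjective N
  let ρ : G →* Q ⧸ K' := (QuotientGroup.mk' K').comp π
  have hρ : Function.Surjective ρ := (QuotientGroup.mk'_surjective K').comp hπ
  haveI : Finite Q := Quotient.finite _
  -- K maps into K'
  have hK : K ≤ ρ.ker := by
    intro x hx
    have hx' : π x ∈ K' := pPrimeCore_map_le π hπ p ⟨x, hx, rfl⟩
    simp only [ρ, MonoidHom.mem_ker, MonoidHom.comp_apply]
    rwa [← QuotientGroup.ker_mk' K', MonoidHom.mem_ker] at hx'
  -- factor ρ through G ⧸ K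
  let ρ' : G ⧸ K →* Q ⧸ K' := QuotientGroup.lift K ρ hK
  have hfact : ρ'.comp (QuotientGroup.mk' K) = ρ := by
    ext x; rfl
  -- the image of OpPrimeP p G under ρ
  have hmapρ : (OpPrimeP p G).map ρ = (pCore p (G ⧸ K)).map ρ' := by
    rw [← hfact, ← Subgroup.map_map]
    congr 1
    exact Subgroup.map_comap_eq_self_of_surjective (QuotientGroup.mk'_surjective K) _
  haveI : (OpPrimeP p G).Normal :=
    Subgroup.Normal.comap (pCore_normal p (G ⧸ K)) (QuotientGroup.mk' K)
  -- the image of OpPrimeP p G in (G/N)/K' is a normal p-subgroup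
  have hT : (OpPrimeP p G).map ρ ≤ pCore p (Q ⧸ K') := by
    apply le_sSup
    refine ⟨(inferInstance : (OpPrimeP p G).Normal).map ρ hρ, ?_⟩
    rw [hmapρ]
    exact (pCore_isPGroup p (G ⧸ K)).map ρ'
  -- hence the image of OpPrimeP p G in G/N is contained in OpPrimeP p (G/N)
  have hOle : (OpPrimeP p G).map π ≤ OpPrimeP p Q := by
    have hdef : OpPrimeP p Q = (pCore p (Q ⧸ K')).comap (QuotientGroup.mk' K') := rfl
    rw [hdef, ← Subgroup.map_le_iff_le_comap, Subgroup.map_map]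
    exact hT
  -- now the divisibility chain, in terms of indices
  have e1 : (OpPrimeP p Q).index ∣ ((OpPrimeP p G).map π).index :=
    Subgroup.index_dvd_of_le hOle
  have e2 : ((OpPrimeP p G).map π).index = (OpPrimeP p G ⊔ N : Subgroup G).index := by
    rw [← Subgroup.index_comap_of_surjective _ hπ, Subgroup.comap_map_eq,
      QuotientGroup.ker_mk']
  have e3 : (OpPrimeP p G ⊔ N : Subgroup G).index ∣ (OpPrimeP p G).index :=
    Subgroup.index_dvd_of_le le_sup_left
  have hfin : q ∣ (OpPrimeP p G).index :=
    dvd_trans (dvd_trans h (e2 ▸ e1)) e3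
  exact hfin
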